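/- Let M be any linear operator on a finite-dimensional Hilbert space A and let σ be a positive definite operator on A. Then the trace norm of M satisfies ‖M‖₁ ≤ sqrt( tr[σ] · tr[σ^{-1/4} M σ^{-1/2} M† σ^{-1/4}] ). -/

import Mathlib

open Matrix Kronecker
open scoped ComplexOrder

/-- `Matrix.PosSemidef.sqrt`, removed from Mathlib; restored with its former definition. -/
noncomputable def Matrix.PosSemidef.sqrt {n 𝕜 : Type*} [Fintype n] [RCLike 𝕜] [DecidableEq n]
    {A : Matrix n n 𝕜} (hA : A.PosSemidef) : Matrix n n 𝕜 :=
  hA.1.eigenvectorUnitary.1 * diagonal ((↑) ∘ (√·) ∘ hA.1.eigenvalues) *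
  (star hA.1.eigenvectorUnitary : Matrix n n 𝕜)

theorem Matrix.PosSemidef.posSemidef_sqrt {n 𝕜 : Type*} [Fintype n] [RCLike 𝕜] [DecidableEq n]
    {A : Matrix n n 𝕜} (hA : A.PosSemidef) : hA.sqrt.PosSemidef := by
  have h : (diagonal ((↑) ∘ (√·) ∘ hA.1.eigenvalues) : Matrix n n 𝕜).PosSemidef :=
    posSemidef_diagonal_iff.mpr fun i => by simp [RCLike.ofReal_nonneg, Real.sqrt_nonneg]
  simpa [Matrix.PosSemidef.sqrt, Matrix.star_eq_conjTranspose] using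
    h.mul_mul_conjTranspose_same (hA.1.eigenvectorUnitary : Matrix n n 𝕜)

theorem Matrix.PosSemidef.sqrt_mul_self {n 𝕜 : Type*} [Fintype n] [RCLike 𝕜] [DecidableEq n]
    {A : Matrix n n 𝕜} (hA : A.PosSemidef) : hA.sqrt * hA.sqrt = A := by
  have hU : (star hA.1.eigenvectorUnitary : Matrix n n 𝕜) * hA.1.eigenvectorUnitary = 1 :=
    Unitary.star_mul_self_of_mem hA.1.eigenvectorUnitary.2
  have hD : (diagonal ((↑) ∘ (√·) ∘ hA.1.eigenvalues) : Matrix n n 𝕜) *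
      diagonal ((↑) ∘ (√·) ∘ hA.1.eigenvalues) = diagonal (RCLike.ofReal ∘ hA.1.eigenvalues) := by
    rw [diagonal_mul_diagonal]
    congr 1
    funext i
    simp only [Function.comp]
    rw [← RCLike.ofReal_mul, Real.mul_self_sqrt (hA.eigenvalues_nonneg i)]
  conv_rhs => rw [hA.1.spectral_theorem, Unitary.conjStarAlgAut_apply]
  rw [Matrix.PosSemidef.sqrt]
  simp only [Matrix.mul_assoc]
  rw [← Matrix.mul_assoc (star hA.1.eigenvectorUnitary : Matrix n n 𝕜), hU, Matrix.one_mul,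
    ← Matrix.mul_assoc (diagonal _), hD]

noncomputable def traceNorm {n m : Type*} [Fintype n] [Fintype m] [DecidableEq m]
    (M : Matrix n m ℂ) : ℝ :=
  ((Matrix.posSemidef_conjTranspose_mul_self M).sqrt.trace).re

noncomputable def ptraceFst {a b : Type*} [Fintype a]
    (M : Matrix (a × b) (a × b) ℂ) : Matrix b b ℂ :=
  Matrix.of fun i j => ∑ k, M (k, i) (k, j)

noncomputable def ptraceSnd {a b : Type*} [Fintype b]
    (M : Matrix (a × b) (a × b) ℂ) : Matrix a a ℂ :=
  Matrix.of fun i j => ∑ k, M (i, k) (j, k)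

private lemma trace_re_nonneg' {n : Type*} [Fintype n] {P : Matrix n n ℂ}
    (hP : P.PosSemidef) : 0 ≤ P.trace.re := by
  classical
  rw [Matrix.trace, Complex.re_sum]
  refine Finset.sum_nonneg fun i _ => ?_
  have h := hP.re_dotProduct_nonneg (Pi.single i 1)
  simpa [Matrix.mulVec, dotProduct, Pi.single_apply, Matrix.diag] using h

private lemma conj_mul_re' (a : ℂ) : ((starRingEnd ℂ) a * a).re = ‖a‖ ^ 2 := by
  rw [Complex.sq_norm, Complex.normSq_apply, Complex.mul_re]
  simp

private lemma trace_cauchySchwarz' {n : Type*} [Fintype n] (X Y : Matrix n n ℂ) :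
    ((Xᴴ * Y).trace).re ≤ Real.sqrt ((Xᴴ * X).trace).re * Real.sqrt ((Yᴴ * Y).trace).re := by
  classical
  have hexp : ∀ (Z W : Matrix n n ℂ), ((Zᴴ * W).trace).re
      = ∑ p : n × n, ((starRingEnd ℂ) (Z p.2 p.1) * W p.2 p.1).re := by
    intro Z W
    simp only [Matrix.trace, Matrix.diag, Matrix.mul_apply, Matrix.conjTranspose_apply,
      Complex.re_sum, Fintype.sum_prod_type, starRingEnd_apply]
  rw [hexp X Y, hexp X X, hexp Y Y]
  simp only [conj_mul_re']
  refine le_trans (Finset.sum_le_sum fun p _ => ?_) (Real.sum_mul_le_sqrt_mul_sqrt Finset.univ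
    (fun p : n × n => ‖X p.2 p.1‖) (fun p : n × n => ‖Y p.2 p.1‖))
  calc ((starRingEnd ℂ) (X p.2 p.1) * Y p.2 p.1).re
      ≤ ‖(starRingEnd ℂ) (X p.2 p.1) * Y p.2 p.1‖ := Complex.re_le_norm _
    _ = ‖X p.2 p.1‖ * ‖Y p.2 p.1‖ := by
        rw [norm_mul, Complex.norm_conj]

private lemma psd_one_sub' {n : Type*} [Fintype n] [DecidableEq n] {P : Matrix n n ℂ}
    (hP : Pᴴ = P) (hP2 : P * P = P) : (1 - P).PosSemidef := by
  have h : (1 - P)ᴴ * (1 - P) = 1 - P := by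
    rw [conjTranspose_sub, conjTranspose_one, hP, Matrix.sub_mul, Matrix.mul_sub,
      Matrix.mul_sub, hP2]
    simp only [Matrix.mul_one, Matrix.one_mul]
    abel
  rw [← h]
  exact Matrix.posSemidef_conjTranspose_mul_self _

private lemma trace_conj_le' {n : Type*} [Fintype n] [DecidableEq n] {Q : Matrix n n ℂ}
    (B : Matrix n n ℂ) (hQ : (1 - Q).PosSemidef) :
    ((Bᴴ * Q * B).trace).re ≤ ((Bᴴ * B).trace).re := by
  have h := trace_re_nonneg' (hQ.conjTranspose_mul_mul_same B)
  have heq : Bᴴ * (1 - Q) * B = Bᴴ * B - Bᴴ * Q * B := by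
    rw [Matrix.mul_sub, Matrix.mul_one, Matrix.sub_mul]
  rw [heq, Matrix.trace_sub, Complex.sub_re] at h
  linarith

private lemma real_aux1 {l : ℝ} (hl : 0 ≤ l) : (Real.sqrt l)⁻¹ * l = Real.sqrt l := by
  rcases hl.eq_or_lt with h | h
  · simp [← h]
  · have h1 : Real.sqrt l ≠ 0 := Real.sqrt_ne_zero'.mpr h
    field_simp
    exact (Real.sq_sqrt hl).symm

private lemma real_aux_t {l : ℝ} (hl : 0 < l) :
    (Real.sqrt l)⁻¹ * (l * (Real.sqrt l)⁻¹) = 1 := by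
  have h1 : Real.sqrt l ≠ 0 := Real.sqrt_ne_zero'.mpr hl
  field_simp
  exact (Real.sq_sqrt hl.le).symm

private lemma real_aux2 {l : ℝ} (hl : 0 ≤ l) :
    ((Real.sqrt l)⁻¹ * (l * (Real.sqrt l)⁻¹)) * ((Real.sqrt l)⁻¹ * (l * (Real.sqrt l)⁻¹))
      = (Real.sqrt l)⁻¹ * (l * (Real.sqrt l)⁻¹) := by
  rcases hl.eq_or_lt with h | h
  · simp [← h]
  · rw [real_aux_t h, mul_one]

private lemma real_aux3 {l : ℝ} (hl : 0 ≤ l) :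
    (Real.sqrt l)⁻¹ * ((Real.sqrt l)⁻¹ * (l * (Real.sqrt l)⁻¹)) = (Real.sqrt l)⁻¹ := by
  rcases hl.eq_or_lt with h | h
  · simp [← h]
  · rw [real_aux_t h, mul_one]

set_option maxHeartbeats 2000000 in
/-- `‖M‖₁ ≤ √(tr[σ] · tr[σ^{-1/4} M σ^{-1/2} M† σ^{-1/4}])` for positive definite `σ`. -/
theorem traceNorm_le_sqrt_trace_mul_trace
    {n : Type*} [Fintype n] [DecidableEq n]
    (M σ : Matrix n n ℂ) (hσ : σ.PosDef) :
    traceNorm M ≤ Real.sqrt ((σ.trace).re *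
      (((hσ.posSemidef.posSemidef_sqrt.sqrt)⁻¹ * M * (hσ.posSemidef.sqrt)⁻¹ * Mᴴ *
        (hσ.posSemidef.posSemidef_sqrt.sqrt)⁻¹).trace).re) := by
  classical
  have hH : (Mᴴ * M).PosSemidef := Matrix.posSemidef_conjTranspose_mul_self M
  set lam : n → ℝ := hH.1.eigenvalues with hlamdef
  set V : Matrix n n ℂ := (hH.1.eigenvectorUnitary : Matrix n n ℂ) with hVdef
  have hV1 : Vᴴ * V = 1 := by
    have := Matrix.mem_unitaryGroup_iff'.mp hH.1.eigenvectorUnitary.2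
    simpa [Matrix.star_eq_conjTranspose] using this
  have hcan1 : ∀ X : Matrix n n ℂ, Vᴴ * (V * X) = X := fun X => by
    rw [← Matrix.mul_assoc, hV1, Matrix.one_mul]
  have hdm2 : ∀ f g : n → ℂ, (Matrix.diagonal f) * (Matrix.diagonal g)
      = Matrix.diagonal (fun i => f i * g i) := by
    intro f g; rw [Matrix.diagonal_mul_diagonal]
  have hdm : ∀ (f g : n → ℂ) (X : Matrix n n ℂ), Matrix.diagonal f * (Matrix.diagonal g * X)
      = Matrix.diagonal (fun i => f i * g i) * X := fun f g X => by
    rw [← Matrix.mul_assoc, hdm2]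
  set a : n → ℝ := fun i => (Real.sqrt (lam i))⁻¹ with hadef
  -- spectral facts
  have hspec : Mᴴ * M = V * (Matrix.diagonal (fun i => (lam i : ℂ)) * Vᴴ) := by
    have h := hH.1.spectral_theorem
    rw [Unitary.conjStarAlgAut_apply, Matrix.mul_assoc] at h
    exact h
  have hspecc : ∀ X : Matrix n n ℂ,
      Mᴴ * (M * X) = V * (Matrix.diagonal (fun i => (lam i : ℂ)) * (Vᴴ * X)) := fun X => by
    conv_lhs => rw [← Matrix.mul_assoc, hspec]
    simp only [Matrix.mul_assoc]
  have hsqrt : hH.sqrt = V * Matrix.diagonal (fun i => (Real.sqrt (lam i) : ℂ)) * Vᴴ := rfl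
  -- diagonal function identities
  have hfun1 : (fun i => ((a i : ℂ)) * ((lam i : ℂ)))
      = fun i => ((Real.sqrt (lam i) : ℂ)) := by
    funext i
    exact_mod_cast real_aux1 (hH.eigenvalues_nonneg i)
  have hfun2 : (fun i => (a i : ℂ) * ((lam i : ℂ) * (a i : ℂ))
        * ((a i : ℂ) * ((lam i : ℂ) * (a i : ℂ))))
      = fun i => (a i : ℂ) * ((lam i : ℂ) * (a i : ℂ)) := by
    funext i
    exact_mod_cast real_aux2 (hH.eigenvalues_nonneg i)
  have hfun3 : (fun i => (a i : ℂ) * ((a i : ℂ) * ((lam i : ℂ) * (a i : ℂ))))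
      = fun i => (a i : ℂ) := by
    funext i
    exact_mod_cast real_aux3 (hH.eigenvalues_nonneg i)
  -- the partial isometry
  set U : Matrix n n ℂ := M * (V * (Matrix.diagonal (fun i => (a i : ℂ)) * Vᴴ)) with hUdef
  have hdiagH : (Matrix.diagonal (fun i => (a i : ℂ)))ᴴ
      = Matrix.diagonal (fun i => (a i : ℂ)) := by
    rw [Matrix.diagonal_conjTranspose]
    have h : (star fun i => ((a i : ℂ))) = fun i => ((a i : ℂ)) := by
      funext i
      simp [Pi.star_apply, Complex.conj_ofReal]
    rw [h]
  have hUH : Uᴴ = V * (Matrix.diagonal (fun i => (a i : ℂ)) * (Vᴴ * Mᴴ)) := by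
    rw [hUdef]
    simp only [Matrix.conjTranspose_mul, Matrix.conjTranspose_conjTranspose, hdiagH,
      Matrix.mul_assoc]
  have hUM : Uᴴ * M = hH.sqrt := by
    rw [hUH, hsqrt]
    simp only [Matrix.mul_assoc, hspec, hcan1, hdm]
    rw [hfun1]
  have hP1 : Uᴴ * U = V * (Matrix.diagonal (fun i => (a i : ℂ) * ((lam i : ℂ) * (a i : ℂ)))
      * Vᴴ) := by
    rw [hUH, hUdef]
    simp only [Matrix.mul_assoc, hspecc, hcan1, hdm]
  have hP1H : (Uᴴ * U)ᴴ = Uᴴ * U := (Matrix.isHermitian_conjTranspose_mul_self U).eq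
  have hP2H : (U * Uᴴ)ᴴ = U * Uᴴ := (Matrix.isHermitian_mul_conjTranspose_self U).eq
  have hP1idem : (Uᴴ * U) * (Uᴴ * U) = Uᴴ * U := by
    rw [hP1]
    simp only [Matrix.mul_assoc, hcan1, hdm]
    rw [hfun2]
  have hUP1 : U * (Uᴴ * U) = U := by
    rw [hP1, hUdef]
    simp only [Matrix.mul_assoc, hcan1, hdm]
    rw [hfun3]
  have hP2idem : (U * Uᴴ) * (U * Uᴴ) = U * Uᴴ := by
    calc (U * Uᴴ) * (U * Uᴴ) = (U * (Uᴴ * U)) * Uᴴ := by simp only [Matrix.mul_assoc]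
      _ = U * Uᴴ := by rw [hUP1]
  have hQ1 : (1 - Uᴴ * U).PosSemidef := psd_one_sub' hP1H hP1idem
  have hQ2 : (1 - U * Uᴴ).PosSemidef := psd_one_sub' hP2H hP2idem
  -- σ-related quantities
  set S : Matrix n n ℂ := hσ.posSemidef.sqrt with hSdef
  set A : Matrix n n ℂ := hσ.posSemidef.posSemidef_sqrt.sqrt with hAdef2
  have hA2 : A * A = S := hσ.posSemidef.posSemidef_sqrt.sqrt_mul_self
  have hS2 : S * S = σ := hσ.posSemidef.sqrt_mul_self
  have hSH : Sᴴ = S := hσ.posSemidef.posSemidef_sqrt.1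
  have hAH : Aᴴ = A := hσ.posSemidef.posSemidef_sqrt.posSemidef_sqrt.1
  have hdetσ : σ.det ≠ 0 := hσ.det_pos.ne'
  have hdetS : S.det ≠ 0 := fun h => hdetσ (by rw [← hS2, Matrix.det_mul, h, mul_zero])
  have hdetA : A.det ≠ 0 := fun h => hdetS (by rw [← hA2, Matrix.det_mul, h, mul_zero])
  have hAinv : A * A⁻¹ = 1 := Matrix.mul_nonsing_inv _ (isUnit_iff_ne_zero.mpr hdetA)
  have hinvA : A⁻¹ * A = 1 := Matrix.nonsing_inv_mul _ (isUnit_iff_ne_zero.mpr hdetA)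
  have hAiH : (A⁻¹)ᴴ = A⁻¹ := by rw [Matrix.conjTranspose_nonsing_inv, hAH]
  have hAiAi : A⁻¹ * A⁻¹ = S⁻¹ := by rw [← hA2, Matrix.mul_inv_rev]
  have ha1 : ∀ X : Matrix n n ℂ, A * (A⁻¹ * X) = X := fun X => by
    rw [← Matrix.mul_assoc, hAinv, Matrix.one_mul]
  have ha2 : ∀ X : Matrix n n ℂ, A⁻¹ * (A * X) = X := fun X => by
    rw [← Matrix.mul_assoc, hinvA, Matrix.one_mul]
  have ha3 : ∀ X : Matrix n n ℂ, A * (A * X) = S * X := fun X => by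
    rw [← Matrix.mul_assoc, hA2]
  have hai3 : ∀ X : Matrix n n ℂ, A⁻¹ * (A⁻¹ * X) = S⁻¹ * X := fun X => by
    rw [← Matrix.mul_assoc, hAiAi]
  set N : Matrix n n ℂ := A⁻¹ * M * A⁻¹ with hNdef
  have hMeq : M = A * N * A := by
    rw [hNdef]
    simp only [Matrix.mul_assoc, ha1, ha2, hinvA, hAinv, Matrix.mul_one]
  set X : Matrix n n ℂ := A * U * A with hXdef
  have hXH : Xᴴ = A * Uᴴ * A := by
    rw [hXdef]
    simp only [Matrix.conjTranspose_mul, hAH, Matrix.mul_assoc]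
  have hNH : Nᴴ = A⁻¹ * Mᴴ * A⁻¹ := by
    rw [hNdef]
    simp only [Matrix.conjTranspose_mul, hAiH, Matrix.mul_assoc]
  -- trace identities
  have h0 : traceNorm M = ((Uᴴ * M).trace).re := by rw [hUM]; rfl
  have h1 : (Uᴴ * M).trace = (Xᴴ * N).trace := by
    calc (Uᴴ * M).trace = (Uᴴ * (A * N) * A).trace := by
          refine congrArg Matrix.trace ?_
          conv_lhs => rw [hMeq]
          simp only [Matrix.mul_assoc]
      _ = (A * Uᴴ * (A * N)).trace := Matrix.trace_mul_cycle Uᴴ (A * N) A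
      _ = (Xᴴ * N).trace := by rw [hXH, Matrix.mul_assoc (A * Uᴴ) A N]
  have h2 : (Xᴴ * X).trace = ((S * U)ᴴ * (U * S)).trace := by
    calc (Xᴴ * X).trace = (A * (Uᴴ * (S * U)) * A).trace := by
          refine congrArg Matrix.trace ?_
          rw [hXH, hXdef]
          simp only [Matrix.mul_assoc, ha3]
      _ = (A * A * (Uᴴ * (S * U))).trace := Matrix.trace_mul_cycle A (Uᴴ * (S * U)) A
      _ = ((Uᴴ * (S * U)) * S).trace := by rw [hA2, Matrix.trace_mul_comm]
      _ = ((S * U)ᴴ * (U * S)).trace := by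
          refine congrArg Matrix.trace ?_
          conv_rhs => rw [Matrix.conjTranspose_mul, hSH]
          simp only [Matrix.mul_assoc]
  have h3 : ((S * U)ᴴ * (S * U)).trace = (Sᴴ * (U * Uᴴ) * S).trace := by
    calc ((S * U)ᴴ * (S * U)).trace = ((Uᴴ * S) * (S * U)).trace := by
          refine congrArg Matrix.trace ?_
          conv_lhs => rw [Matrix.conjTranspose_mul, hSH]
      _ = ((S * U) * (Uᴴ * S)).trace := Matrix.trace_mul_comm _ _
      _ = (Sᴴ * (U * Uᴴ) * S).trace := by
          refine congrArg Matrix.trace ?_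
          rw [hSH]
          simp only [Matrix.mul_assoc]
  have h4 : (U * S)ᴴ * (U * S) = Sᴴ * (Uᴴ * U) * S := by
    conv_lhs => rw [Matrix.conjTranspose_mul]
    simp only [Matrix.mul_assoc]
  have h5 : Sᴴ * S = σ := by rw [hSH, hS2]
  have h6 : (Nᴴ * N).trace = (A⁻¹ * M * S⁻¹ * Mᴴ * A⁻¹).trace := by
    calc (Nᴴ * N).trace = ((A⁻¹ * (Mᴴ * (S⁻¹ * M))) * A⁻¹).trace := by
          refine congrArg Matrix.trace ?_
          rw [hNH, hNdef]
          simp only [Matrix.mul_assoc, hai3]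
      _ = (A⁻¹ * (A⁻¹ * (Mᴴ * (S⁻¹ * M)))).trace := Matrix.trace_mul_comm _ _
      _ = ((S⁻¹ * Mᴴ) * (S⁻¹ * M)).trace := by
          refine congrArg Matrix.trace ?_
          rw [hai3]
          simp only [Matrix.mul_assoc]
      _ = ((S⁻¹ * M) * (S⁻¹ * Mᴴ)).trace := Matrix.trace_mul_comm _ _
      _ = (A⁻¹ * M * S⁻¹ * Mᴴ * A⁻¹).trace := by
          rw [show (A⁻¹ * M * S⁻¹ * Mᴴ * A⁻¹).trace = (A⁻¹ * (A⁻¹ * M * S⁻¹ * Mᴴ)).trace from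
            Matrix.trace_mul_comm _ _]
          refine congrArg Matrix.trace ?_
          simp only [Matrix.mul_assoc, hai3]
  -- putting it together
  have hσtr : 0 ≤ σ.trace.re := trace_re_nonneg' hσ.posSemidef
  have hb1 : (((S * U)ᴴ * (S * U)).trace).re ≤ σ.trace.re := by
    rw [h3]
    calc ((Sᴴ * (U * Uᴴ) * S).trace).re ≤ ((Sᴴ * S).trace).re := trace_conj_le' S hQ2
      _ = σ.trace.re := by rw [h5]
  have hb2 : (((U * S)ᴴ * (U * S)).trace).re ≤ σ.trace.re := by
    rw [h4]
    calc ((Sᴴ * (Uᴴ * U) * S).trace).re ≤ ((Sᴴ * S).trace).re := trace_conj_le' S hQ1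
      _ = σ.trace.re := by rw [h5]
  have hXX : ((Xᴴ * X).trace).re ≤ σ.trace.re := by
    rw [h2]
    calc (((S * U)ᴴ * (U * S)).trace).re
        ≤ Real.sqrt (((S * U)ᴴ * (S * U)).trace).re * Real.sqrt (((U * S)ᴴ * (U * S)).trace).re :=
          trace_cauchySchwarz' (S * U) (U * S)
      _ ≤ Real.sqrt σ.trace.re * Real.sqrt σ.trace.re :=
          mul_le_mul (Real.sqrt_le_sqrt hb1) (Real.sqrt_le_sqrt hb2) (Real.sqrt_nonneg _)
            (Real.sqrt_nonneg _)
      _ = σ.trace.re := Real.mul_self_sqrt hσtr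
  calc traceNorm M = ((Xᴴ * N).trace).re := by rw [h0, h1]
    _ ≤ Real.sqrt ((Xᴴ * X).trace).re * Real.sqrt ((Nᴴ * N).trace).re :=
        trace_cauchySchwarz' X N
    _ ≤ Real.sqrt σ.trace.re * Real.sqrt ((Nᴴ * N).trace).re :=
        mul_le_mul_of_nonneg_right (Real.sqrt_le_sqrt hXX) (Real.sqrt_nonneg _)
    _ = Real.sqrt (σ.trace.re * ((Nᴴ * N).trace).re) := (Real.sqrt_mul hσtr _).symm
    _ = _ := by rw [h6]
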